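/- arXiv:2307.07937 — 7 statements merged into one kernel-verified Lean document; each statement's English description precedes it below -/
import Mathlib

section
/- Let F₁, F₂ : ℝᵖ → ℝ^q be linear maps such that for every x ∈ ℝᵖ, the vectors F₁x and F₂x are linearly dependent (i.e., rank(F₁x, F₂x) ≤ 1). Then either F₁ and F₂ are proportional (there exist scalars (λ,μ) ≠ (0,0) with λF₁ = μF₂), or there exist a vector w ∈ ℝ^q and linear forms λ₁, λ₂ on ℝᵖ such that F₁x = λ₁(x)·w and F₂x = λ₂(x)·w for all x. -/
/-!
Write `u ∥ v` for linear dependence. If `F₁ z, F₁ w` are independent, then `F₂ u = c_u • F₁ u`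
for `u ∈ {z, w}`, and `c_z • F₁ z + c_w • F₁ w = F₂ (z + w) ∥ F₁ z + F₁ w` forces `c_z = c_w`.
Applying this to `(x, z)` when `F₁ x, F₁ z` are independent, and to `(x + w, z)` when they are
not, gives `F₂ = c_z • F₁`; symmetrically with `F₁, F₂` swapped. Otherwise both maps have rank
at most one, and at a point `y` where neither vanishes `F₂ y ∥ F₁ y`, so both ranges lie on the
line through `F₁ y`.
-/

open Submodule

theorem not_linearIndependent_pair_iff {R M : Type*} [Ring R] [AddCommGroup M]
    [Module R M] {x y : M} :
    ¬ LinearIndependent R ![x, y] ↔ ∃ a b : R, (a ≠ 0 ∨ b ≠ 0) ∧ a • x + b • y = 0 := by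
  rw [LinearIndependent.pair_iff]
  push Not
  simp only [or_iff_not_imp_left, not_not, and_comm]

theorem LinearMap.exists_apply_ne_zero_and_apply_ne_zero {R M N₁ N₂ : Type*} [Semiring R]
    [AddCommMonoid M] [AddCommMonoid N₁] [AddCommMonoid N₂] [Module R M] [Module R N₁]
    [Module R N₂] {f₁ : M →ₗ[R] N₁} {f₂ : M →ₗ[R] N₂} (h₁ : f₁ ≠ 0) (h₂ : f₂ ≠ 0) :
    ∃ x, f₁ x ≠ 0 ∧ f₂ x ≠ 0 := by
  obtain ⟨x₁, hx₁⟩ := DFunLike.ne_iff.mp h₁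
  obtain ⟨x₂, hx₂⟩ := DFunLike.ne_iff.mp h₂
  by_cases h₂₁ : f₂ x₁ = 0
  · by_cases h₁₂ : f₁ x₂ = 0
    · exact ⟨x₁ + x₂, by simpa [h₁₂] using hx₁, by simpa [h₂₁] using hx₂⟩
    · exact ⟨x₂, h₁₂, hx₂⟩
  · exact ⟨x₁, hx₁, h₂₁⟩

variable {K V W : Type*} [Field K] [AddCommGroup V] [Module K V] [AddCommGroup W] [Module K W]

theorem mem_span_singleton_of_not_linearIndependent_pair {x y : W} (hx : x ≠ 0)
    (h : ¬ LinearIndependent K ![x, y]) : y ∈ K ∙ x := by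
  simpa [LinearIndependent.pair_iff' hx, mem_span_singleton] using h

theorem LinearMap.exists_forall_eq_smul_of_forall_mem_span_singleton {F : V →ₗ[K] W} {w : W}
    (hw : w ≠ 0) (hF : ∀ x, F x ∈ K ∙ w) : ∃ l : V →ₗ[K] K, ∀ x, F x = l x • w :=
  ⟨(LinearEquiv.coord K W w hw).toLinearMap ∘ₗ F.codRestrict _ hF,
    fun x => (LinearEquiv.coord_apply_smul K W w hw ⟨F x, hF x⟩).symm⟩

section PointwiseDependent

variable {F₁ F₂ : V →ₗ[K] W}

theorem exists_smul_eq_of_linearIndependent_pair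
    (hdep : ∀ x, ¬ LinearIndependent K ![F₁ x, F₂ x]) {u v : V}
    (huv : LinearIndependent K ![F₁ u, F₁ v]) :
    ∃ c : K, F₂ u = c • F₁ u ∧ F₂ v = c • F₁ v := by
  obtain ⟨a, ha⟩ := mem_span_singleton.mp <|
    mem_span_singleton_of_not_linearIndependent_pair (by simpa using huv.ne_zero 0) (hdep u)
  obtain ⟨b, hb⟩ := mem_span_singleton.mp <|
    mem_span_singleton_of_not_linearIndependent_pair (by simpa using huv.ne_zero 1) (hdep v)
  have hab : a = b := by
    by_contra hab
    apply hdep (u + v)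
    rw [map_add, map_add, ← ha, ← hb]
    simpa using (LinearIndependent.pair_add_smul_add_smul_iff (1 : K) 1 a b).mpr
      ⟨huv, by simpa using Ne.symm hab⟩
  exact ⟨a, ha.symm, hab ▸ hb.symm⟩

theorem apply_eq_smul_of_linearIndependent_pair
    (hdep : ∀ x, ¬ LinearIndependent K ![F₁ x, F₂ x]) {u v : V}
    (huv : LinearIndependent K ![F₁ u, F₁ v]) {c : K} (hv : F₂ v = c • F₁ v) :
    F₂ u = c • F₁ u := by
  obtain ⟨c', hu, hv'⟩ := exists_smul_eq_of_linearIndependent_pair hdep huv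
  rwa [smul_left_injective K (by simpa using huv.ne_zero 1) (hv'.symm.trans hv)] at hu

theorem exists_eq_smul_of_linearIndependent_pair
    (hdep : ∀ x, ¬ LinearIndependent K ![F₁ x, F₂ x]) {z w : V}
    (hzw : LinearIndependent K ![F₁ z, F₁ w]) : ∃ c : K, F₂ = c • F₁ := by
  obtain ⟨c, hz, hw⟩ := exists_smul_eq_of_linearIndependent_pair hdep hzw
  refine ⟨c, LinearMap.ext fun x => ?_⟩
  by_cases hxz : LinearIndependent K ![F₁ x, F₁ z]
  · exact apply_eq_smul_of_linearIndependent_pair hdep hxz hz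
  obtain ⟨r, hr⟩ := mem_span_singleton.mp <|
    mem_span_singleton_of_not_linearIndependent_pair (by simpa using hzw.ne_zero 0)
      (LinearIndependent.pair_symm_iff.not.mp hxz)
  have hxwz : LinearIndependent K ![F₁ (x + w), F₁ z] := by
    rw [map_add, ← hr, LinearIndependent.pair_symm_iff]
    simpa using hzw
  have hxw := apply_eq_smul_of_linearIndependent_pair hdep hxwz hz
  rw [map_add, map_add, hw, smul_add] at hxw
  simpa using hxw

theorem exists_smul_eq_smul_or_exists_forall_eq_smul
    (hdep : ∀ x, ¬ LinearIndependent K ![F₁ x, F₂ x]) :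
    (∃ a b : K, (a ≠ 0 ∨ b ≠ 0) ∧ a • F₁ = b • F₂) ∨
    (∃ (w : W) (l₁ l₂ : V →ₗ[K] K), ∀ x, F₁ x = l₁ x • w ∧ F₂ x = l₂ x • w) := by
  by_cases h₁ : ∃ z w, LinearIndependent K ![F₁ z, F₁ w]
  · obtain ⟨z, w, hzw⟩ := h₁
    obtain ⟨c, hc⟩ := exists_eq_smul_of_linearIndependent_pair hdep hzw
    exact Or.inl ⟨c, 1, Or.inr one_ne_zero, by rw [hc, one_smul]⟩
  by_cases h₂ : ∃ z w, LinearIndependent K ![F₂ z, F₂ w]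
  · obtain ⟨z, w, hzw⟩ := h₂
    obtain ⟨c, hc⟩ := exists_eq_smul_of_linearIndependent_pair
      (fun x => LinearIndependent.pair_symm_iff.not.mp (hdep x)) hzw
    exact Or.inl ⟨1, c, Or.inl one_ne_zero, by rw [hc, one_smul]⟩
  push Not at h₁ h₂
  by_cases hF₁ : F₁ = 0
  · exact Or.inl ⟨1, 0, Or.inl one_ne_zero, by simp [hF₁]⟩
  by_cases hF₂ : F₂ = 0
  · exact Or.inl ⟨0, 1, Or.inr one_ne_zero, by simp [hF₂]⟩
  obtain ⟨y, hy₁, hy₂⟩ := LinearMap.exists_apply_ne_zero_and_apply_ne_zero hF₁ hF₂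
  have hF₂y : F₂ y ∈ K ∙ F₁ y := mem_span_singleton_of_not_linearIndependent_pair hy₁ (hdep y)
  obtain ⟨l₁, hl₁⟩ := LinearMap.exists_forall_eq_smul_of_forall_mem_span_singleton hy₁
    fun x => mem_span_singleton_of_not_linearIndependent_pair hy₁ (h₁ y x)
  obtain ⟨l₂, hl₂⟩ := LinearMap.exists_forall_eq_smul_of_forall_mem_span_singleton hy₁
    fun x => mem_span_singleton_trans
      (mem_span_singleton_of_not_linearIndependent_pair hy₂ (h₂ y x)) hF₂y
  exact Or.inr ⟨F₁ y, l₁, l₂, fun x => ⟨hl₁ x, hl₂ x⟩⟩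

end PointwiseDependent

/-- If `F₁, F₂ : ℝᵖ → ℝ^q` are linear maps with `F₁x` and
`F₂x` linearly dependent for every `x`, then either `F₁` and `F₂` are
proportional, or both take values on a single line `ℝw`. -/
theorem pointwise_dependent_linear_maps
    (p q : ℕ) (F₁ F₂ : (Fin p → ℝ) →ₗ[ℝ] (Fin q → ℝ))
    (hdep : ∀ x : Fin p → ℝ, ∃ a b : ℝ, (a ≠ 0 ∨ b ≠ 0) ∧ a • F₁ x + b • F₂ x = 0) :
    (∃ a b : ℝ, (a ≠ 0 ∨ b ≠ 0) ∧ a • F₁ = b • F₂) ∨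
    (∃ (w : Fin q → ℝ) (l₁ l₂ : (Fin p → ℝ) →ₗ[ℝ] ℝ),
      ∀ x : Fin p → ℝ, F₁ x = l₁ x • w ∧ F₂ x = l₂ x • w) :=
  exists_smul_eq_smul_or_exists_forall_eq_smul fun x =>
    not_linearIndependent_pair_iff.mpr (hdep x)
end

section
/- Let V be a 4-dimensional real inner product space (positive definite), and let K ∈ 𝔰𝔬(V) be skew-symmetric with det K ≠ 0. If P is a positive semi-definite symmetric endomorphism of V such that P K is symmetric, then P = 0. -/
open scoped RealInnerProductSpace

/-- On a 4-dimensional real inner product space, if `K` is an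
invertible skew-symmetric endomorphism and `P` is a positive semi-definite
symmetric endomorphism such that `P ∘ K` is symmetric, then `P = 0`. -/
theorem psd_mul_skew_symmetric_eq_zero
    {V : Type*} [NormedAddCommGroup V] [InnerProductSpace ℝ V]
    [FiniteDimensional ℝ V] (hdim : Module.finrank ℝ V = 4)
    (K P : V →ₗ[ℝ] V)
    (hKskew : ∀ x y : V, ⟪K x, y⟫ = -⟪x, K y⟫)
    (hKdet : LinearMap.det K ≠ 0)
    (hPsymm : ∀ x y : V, ⟪P x, y⟫ = ⟪x, P y⟫)
    (hPpsd : ∀ x : V, 0 ≤ ⟪P x, x⟫)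
    (hPKsymm : ∀ x y : V, ⟪P (K x), y⟫ = ⟪x, P (K y)⟫) :
    P = 0 := by
  -- K is injective
  have hKinj : Function.Injective K := by
    have h := (K.equivOfDetNeZero hKdet).injective
    exact h
  -- P anticommutes with K: P ∘ K = - K ∘ P
  have hanti : ∀ x : V, P (K x) = - K (P x) := by
    intro x
    have h : ∀ y : V, ⟪P (K x) + K (P x), y⟫ = 0 := by
      intro y
      have h1 : ⟪P (K x), y⟫ = -⟪K (P x), y⟫ := by
        rw [hPKsymm x y, ← hPsymm, hKskew (P x) y, neg_neg]
      simp [inner_add_left, h1]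
    have h0 := inner_self_eq_zero (𝕜 := ℝ) (x := P (K x) + K (P x)) |>.1 (h _)
    exact eq_neg_of_add_eq_zero_left h0
  -- spectral theorem for P
  have hT : P.IsSymmetric := fun x y => hPsymm x y
  have hb := hT.eigenvectorBasis hdim
  apply (hT.eigenvectorBasis hdim).toBasis.ext
  intro i
  set v := hT.eigenvectorBasis hdim i with hv
  set μ := hT.eigenvalues hdim i with hμ
  have hPv : P v = μ • v := hT.apply_eigenvectorBasis hdim i
  have hvne : v ≠ 0 := (hT.hasEigenvector_eigenvectorBasis hdim i).2
  -- μ ≥ 0 from psd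
  have hvnorm : (0:ℝ) < ⟪v, v⟫ :=
    lt_of_le_of_ne real_inner_self_nonneg (fun h => hvne (inner_self_eq_zero.1 h.symm))
  have hmu0 : 0 ≤ μ := by
    have := hPpsd v
    rw [hPv] at this
    rw [real_inner_smul_left] at this
    nlinarith
  -- μ ≤ 0: P (K v) = -μ • K v and K v ≠ 0
  have hKv : K v ≠ 0 := fun h => hvne (hKinj (h.trans (map_zero K).symm))
  have hKvnorm : (0:ℝ) < ⟪K v, K v⟫ :=
    lt_of_le_of_ne real_inner_self_nonneg (fun h => hKv (inner_self_eq_zero.1 h.symm))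
  have hPKv : P (K v) = (-μ) • K v := by
    rw [hanti v, hPv, map_smul]
    module
  have hmu1 : μ ≤ 0 := by
    have := hPpsd (K v)
    rw [hPKv, real_inner_smul_left] at this
    nlinarith
  have : μ = 0 := le_antisymm hmu1 hmu0
  simp [OrthonormalBasis.coe_toBasis, ← hv, hPv, this]
end

section
/- In 𝔰𝔬(4) = 𝔰𝔬(3) ⊕ 𝔰𝔬(3) (direct sum of ideals), let S be a 2-dimensional subspace contained in one of the two 𝔰𝔬(3)-components, with basis K₁, K₂. Then for the Hodge-star images ⋆K₁, ⋆K₂ (which lie in the same component): (⋆K₂)² = μ·Id for some μ < 0, and (⋆K₁)(⋆K₂) = ν·Id + K₃ where ν ∈ ℝ and K₃ is a nonzero element of the same 𝔰𝔬(3)-component; in particular det K₃ ≠ 0. -/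
open Matrix
/-- The Hodge star operator on skew-symmetric `4 × 4` real matrices, under the
identification `𝔰𝔬(4) ≅ Λ²ℝ⁴`. -/
def hodgeStar (A : Matrix (Fin 4) (Fin 4) ℝ) : Matrix (Fin 4) (Fin 4) ℝ :=
  !![0, A 2 3, -(A 1 3), A 1 2;
     -(A 2 3), 0, A 0 3, -(A 0 2);
     A 1 3, -(A 0 3), 0, A 0 1;
     -(A 1 2), A 0 2, -(A 0 1), 0]

/-- General element of the `ε`-eigenspace of the Hodge star. -/
def mkThree (ε a b c : ℝ) : Matrix (Fin 4) (Fin 4) ℝ :=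
  !![0, a, b, c;
     -a, 0, ε*c, -(ε*b);
     -b, -(ε*c), 0, ε*a;
     -c, ε*b, -(ε*a), 0]

lemma mkThree_skew (ε a b c : ℝ) : (mkThree ε a b c)ᵀ = -(mkThree ε a b c) := by
  ext i j
  fin_cases i <;> fin_cases j <;> simp [mkThree]

lemma mkThree_hodge (ε : ℝ) (hε : ε = 1 ∨ ε = -1) (a b c : ℝ) :
    hodgeStar (mkThree ε a b c) = ε • mkThree ε a b c := by
  rcases hε with rfl | rfl <;>
    · ext i j
      fin_cases i <;> fin_cases j <;> simp [hodgeStar, mkThree]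

lemma mkThree_mul (ε : ℝ) (hε : ε = 1 ∨ ε = -1) (a b c A B C : ℝ) :
    mkThree ε a b c * mkThree ε A B C =
      (-(a*A + b*B + c*C)) • (1 : Matrix (Fin 4) (Fin 4) ℝ) +
      mkThree ε (ε*(c*B - b*C)) (ε*(a*C - c*A)) (ε*(b*A - a*B)) := by
  rcases hε with rfl | rfl <;>
    · ext i j
      fin_cases i <;> fin_cases j <;>
        simp [mkThree, Matrix.mul_apply, Fin.sum_univ_four, Matrix.one_apply] <;> ring

lemma mkThree_zero (ε : ℝ) : mkThree ε 0 0 0 = 0 := by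
  ext i j
  fin_cases i <;> fin_cases j <;>
    simp [mkThree, Matrix.vecHead, Matrix.vecTail, Matrix.zero_apply]

lemma mkThree_det_ne (ε : ℝ) (hε : ε = 1 ∨ ε = -1) (p q r : ℝ)
    (h : ¬(p = 0 ∧ q = 0 ∧ r = 0)) : (mkThree ε p q r).det ≠ 0 := by
  intro hdet
  have hsq : mkThree ε p q r * mkThree ε p q r =
      (-(p*p + q*q + r*r)) • (1 : Matrix (Fin 4) (Fin 4) ℝ) := by
    rw [mkThree_mul ε hε]
    have e1 : ε*(r*q - q*r) = 0 := by ring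
    have e2 : ε*(p*r - r*p) = 0 := by ring
    have e3 : ε*(q*p - p*q) = 0 := by ring
    rw [e1, e2, e3, mkThree_zero, add_zero]
  have hd := congrArg Matrix.det hsq
  rw [Matrix.det_mul, hdet, mul_zero, Matrix.det_smul, Matrix.det_one] at hd
  have h4 : (-(p*p + q*q + r*r))^4 = 0 := by simpa using hd.symm
  have hs0 : -(p*p + q*q + r*r) = 0 := by
    exact pow_eq_zero_iff (by norm_num) |>.mp h4
  refine h ⟨?_, ?_, ?_⟩ <;> nlinarith [sq_nonneg p, sq_nonneg q, sq_nonneg r]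

lemma mkThree_smul_add (ε a b c A B C s t : ℝ) :
    s • mkThree ε a b c + t • mkThree ε A B C =
      mkThree ε (s*a + t*A) (s*b + t*B) (s*c + t*C) := by
  ext i j
  fin_cases i <;> fin_cases j <;> simp [mkThree] <;> ring

lemma mkThree_eq_zero (ε a b c : ℝ) (h : mkThree ε a b c = 0) :
    a = 0 ∧ b = 0 ∧ c = 0 := by
  refine ⟨?_, ?_, ?_⟩
  · have := congrFun (congrFun h 0) 1; simpa [mkThree] using this
  · have := congrFun (congrFun h 0) 2; simpa [mkThree] using this
  · have := congrFun (congrFun h 0) 3; simpa [mkThree] using this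

lemma eigen_form (ε : ℝ) (K : Matrix (Fin 4) (Fin 4) ℝ)
    (hskew : Kᵀ = -K) (hsd : hodgeStar K = ε • K) :
    K = mkThree ε (K 0 1) (K 0 2) (K 0 3) := by
  have hs : ∀ i j, K j i = -K i j := by
    intro i j
    have := congrFun (congrFun hskew i) j
    simpa [Matrix.transpose_apply] using this
  have h1 : K 2 3 = ε * K 0 1 := by
    have := congrFun (congrFun hsd 0) 1; simpa [hodgeStar] using this
  have h2 : -(K 1 3) = ε * K 0 2 := by
    have := congrFun (congrFun hsd 0) 2; simpa [hodgeStar] using this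
  have h3 : K 1 2 = ε * K 0 3 := by
    have := congrFun (congrFun hsd 0) 3; simpa [hodgeStar] using this
  ext i j
  fin_cases i <;> fin_cases j <;> simp [mkThree] <;>
    first
      | linear_combination hs 0 0 / 2
      | linear_combination hs 1 1 / 2
      | linear_combination hs 2 2 / 2
      | linear_combination hs 3 3 / 2
      | linear_combination hs 0 1
      | linear_combination hs 0 2
      | linear_combination hs 0 3
      | linear_combination h1
      | linear_combination -h2
      | linear_combination h3
      | linear_combination hs 1 2 - h3
      | linear_combination hs 1 3 + h2
      | linear_combination hs 2 3 - h1

/-- If `K₁, K₂` are linearly independent elements of one of the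
two `𝔰𝔬(3)`-components of `𝔰𝔬(4)` (the `ε`-eigenspace of the Hodge star,
`ε = ±1`), then `(⋆K₂)² = μ·Id` with `μ < 0`, and
`(⋆K₁)(⋆K₂) = ν·Id + K₃` with `K₃` a nonzero element of the same component;
in particular `det K₃ ≠ 0`. -/
theorem so4_component_products
    (ε : ℝ) (hε : ε = 1 ∨ ε = -1)
    (K₁ K₂ : Matrix (Fin 4) (Fin 4) ℝ)
    (hK₁skew : K₁ᵀ = -K₁) (hK₂skew : K₂ᵀ = -K₂)
    (hK₁sd : hodgeStar K₁ = ε • K₁) (hK₂sd : hodgeStar K₂ = ε • K₂)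
    (hli : LinearIndependent ℝ ![K₁, K₂]) :
    (∃ μ : ℝ, μ < 0 ∧ hodgeStar K₂ * hodgeStar K₂ = μ • (1 : Matrix (Fin 4) (Fin 4) ℝ)) ∧
    (∃ (ν : ℝ) (K₃ : Matrix (Fin 4) (Fin 4) ℝ),
      hodgeStar K₁ * hodgeStar K₂ = ν • (1 : Matrix (Fin 4) (Fin 4) ℝ) + K₃ ∧
      K₃ ≠ 0 ∧ K₃ᵀ = -K₃ ∧ hodgeStar K₃ = ε • K₃ ∧ K₃.det ≠ 0) := by
  have hε2 : ε * ε = 1 := by rcases hε with rfl | rfl <;> norm_num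
  have hεne : ε ≠ 0 := by rcases hε with rfl | rfl <;> norm_num
  set a₁ := K₁ 0 1 with ha₁
  set b₁ := K₁ 0 2 with hb₁
  set c₁ := K₁ 0 3 with hc₁
  set a₂ := K₂ 0 1 with ha₂
  set b₂ := K₂ 0 2 with hb₂
  set c₂ := K₂ 0 3 with hc₂
  have hK₁eq : K₁ = mkThree ε a₁ b₁ c₁ := eigen_form ε K₁ hK₁skew hK₁sd
  have hK₂eq : K₂ = mkThree ε a₂ b₂ c₂ := eigen_form ε K₂ hK₂skew hK₂sd
  have hpair := LinearIndependent.pair_iff.mp hli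
  have hK₁ne : K₁ ≠ 0 := by
    intro h
    have := (hpair 1 0 (by simp [h])).1
    norm_num at this
  have hK₂ne : K₂ ≠ 0 := by
    intro h
    have := (hpair 0 1 (by simp [h])).2
    norm_num at this
  -- the key product simplification : ⋆K = ε•K and ε² = 1
  have hstar : ∀ (A B : Matrix (Fin 4) (Fin 4) ℝ), (ε • A) * (ε • B) = A * B := by
    intro A B
    rw [smul_mul_assoc, mul_smul_comm, smul_smul, hε2, one_smul]
  constructor
  · refine ⟨-(a₂^2 + b₂^2 + c₂^2), ?_, ?_⟩
    · by_contra h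
      push_neg at h
      have ha : a₂ = 0 := by nlinarith [sq_nonneg a₂, sq_nonneg b₂, sq_nonneg c₂]
      have hb : b₂ = 0 := by nlinarith [sq_nonneg a₂, sq_nonneg b₂, sq_nonneg c₂]
      have hc : c₂ = 0 := by nlinarith [sq_nonneg a₂, sq_nonneg b₂, sq_nonneg c₂]
      exact hK₂ne (by rw [hK₂eq, ha, hb, hc, mkThree_zero])
    · rw [hK₂sd, hstar, hK₂eq, mkThree_mul ε hε a₂ b₂ c₂ a₂ b₂ c₂]
      have : ε*(c₂*b₂ - b₂*c₂) = 0 := by ring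
      rw [this]
      have : ε*(a₂*c₂ - c₂*a₂) = 0 := by ring
      rw [this]
      have : ε*(b₂*a₂ - a₂*b₂) = 0 := by ring
      rw [this, mkThree_zero, add_zero]
      congr 1
      ring
  · have hK₃ne : mkThree ε (ε*(c₁*b₂ - b₁*c₂)) (ε*(a₁*c₂ - c₁*a₂)) (ε*(b₁*a₂ - a₁*b₂)) ≠ 0 := by
      intro h
      obtain ⟨hp, hq, hr⟩ := mkThree_eq_zero _ _ _ _ h
      have hp' : c₁*b₂ - b₁*c₂ = 0 := by
        rcases mul_eq_zero.mp hp with h' | h'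
        · exact absurd h' hεne
        · exact h'
      have hq' : a₁*c₂ - c₁*a₂ = 0 := by
        rcases mul_eq_zero.mp hq with h' | h'
        · exact absurd h' hεne
        · exact h'
      have hr' : b₁*a₂ - a₁*b₂ = 0 := by
        rcases mul_eq_zero.mp hr with h' | h'
        · exact absurd h' hεne
        · exact h'
      have hv₁ : ¬(a₁ = 0 ∧ b₁ = 0 ∧ c₁ = 0) := by
        rintro ⟨h1, h2, h3⟩
        exact hK₁ne (by rw [hK₁eq, h1, h2, h3, mkThree_zero])
      have key : ∀ s t : ℝ, s*a₁ + t*a₂ = 0 → s*b₁ + t*b₂ = 0 → s*c₁ + t*c₂ = 0 →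
          s = 0 ∧ t = 0 := by
        intro s t h1 h2 h3
        apply hpair
        rw [hK₁eq, hK₂eq, mkThree_smul_add, h1, h2, h3, mkThree_zero]
      rcases not_and_or.mp hv₁ with h1 | h23
      · have := key a₂ (-a₁) (by ring) (by linear_combination hr') (by linear_combination -hq')
        exact h1 (by linarith [this.2] : a₁ = 0)
      · rcases not_and_or.mp h23 with h2 | h3
        · have := key b₂ (-b₁) (by linear_combination -hr') (by ring) (by linear_combination hp')
          exact h2 (by linarith [this.2] : b₁ = 0)
        · have := key c₂ (-c₁) (by linear_combination hq') (by linear_combination -hp') (by ring)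
          exact h3 (by linarith [this.2] : c₁ = 0)
    refine ⟨-(a₁*a₂ + b₁*b₂ + c₁*c₂),
      mkThree ε (ε*(c₁*b₂ - b₁*c₂)) (ε*(a₁*c₂ - c₁*a₂)) (ε*(b₁*a₂ - a₁*b₂)), ?_, ?_, ?_, ?_, ?_⟩
    · rw [hK₁sd, hK₂sd, hstar, hK₁eq, hK₂eq, mkThree_mul ε hε]
    · -- K₃ ≠ 0
      exact hK₃ne
    · exact mkThree_skew _ _ _ _
    · exact mkThree_hodge ε hε _ _ _
    · apply mkThree_det_ne ε hε
      rintro ⟨h1, h2, h3⟩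
      exact hK₃ne (by rw [h1, h2, h3, mkThree_zero])
end

section
/- Let V be a real vector space with a symmetric bilinear form of degeneracy 1 that is semidefinite (i.e., the radical is 1-dimensional and the form is positive semidefinite). Let e span the radical. If A : V → V is both nilpotent and skew-symmetric with respect to the form, then the image of A is contained in ℝe. -/
/-- If a symmetric bilinear form on `V` is positive
semidefinite with 1-dimensional radical `ℝe`, then any endomorphism of `V`
that is both nilpotent and skew-symmetric has image contained in `ℝe`. -/
theorem nilpotent_skew_image_in_radical_one
    {V : Type*} [AddCommGroup V] [Module ℝ V] [FiniteDimensional ℝ V]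
    (B : V → V → ℝ) (hBsymm : ∀ x y, B x y = B y x)
    (hBbilin : IsLinearMap ℝ (fun x => B x) ∧ ∀ x, IsLinearMap ℝ (B x))
    (hBpsd : ∀ x, 0 ≤ B x x)
    (e : V) (he : e ≠ 0)
    (hrad : ∀ x : V, (∀ y : V, B x y = 0) ↔ x ∈ Submodule.span ℝ {e})
    (A : V →ₗ[ℝ] V)
    (hAskew : ∀ x y : V, B (A x) y + B x (A y) = 0)
    (hAnil : IsNilpotent A) :
    ∀ x : V, A x ∈ Submodule.span ℝ {e} := by
  set R := Submodule.span ℝ ({e} : Set V) with hR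
  -- basic bilinearity facts
  have haddl : ∀ x y z : V, B (x + y) z = B x z + B y z := by
    intro x y z
    have := hBbilin.1.map_add x y
    exact congrFun this z
  have hsmull : ∀ (r : ℝ) (x z : V), B (r • x) z = r * B x z := by
    intro r x z
    have := hBbilin.1.map_smul r x
    have := congrFun this z
    simpa using this
  have haddr : ∀ x y z : V, B x (y + z) = B x y + B x z := fun x y z =>
    (hBbilin.2 x).map_add y z
  have hsmulr : ∀ (r : ℝ) (x z : V), B x (r • z) = r * B x z := fun r x z => by
    simpa using (hBbilin.2 x).map_smul r z
  -- radical members pair to zero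
  have hmem : ∀ x : V, x ∈ R → ∀ y : V, B x y = 0 := fun x hx => (hrad x).mpr hx
  -- skew, rewritten
  have hskew : ∀ x y : V, B (A x) y = - B x (A y) := by
    intro x y; have := hAskew x y; linarith
  -- iterated skew
  have hiter : ∀ (k : ℕ) (x y : V), B ((A ^ k) x) y = (-1 : ℝ) ^ k * B x ((A ^ k) y) := by
    intro k
    induction k with
    | zero => intro x y; simp
    | succ k ih =>
      intro x y
      have h1 : (A ^ (k + 1)) x = (A ^ k) (A x) := by
        rw [pow_succ]; rfl
      have h2 : A ((A ^ k) y) = (A ^ (k + 1)) y := by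
        rw [pow_succ']; rfl
      rw [h1, ih (A x) y, hskew x ((A ^ k) y), h2]
      ring
  -- Cauchy–Schwarz: if B u u = 0 then u is in the radical
  have hcs : ∀ u : V, B u u = 0 → u ∈ R := by
    intro u hu
    rw [← hrad]
    intro y
    set c := B u y with hc
    set d := B y y with hd
    have hd0 : 0 ≤ d := hBpsd y
    have key : ∀ t : ℝ, 0 ≤ 2 * t * c + t ^ 2 * d := by
      intro t
      have h := hBpsd (u + t • y)
      have : B (u + t • y) (u + t • y)
          = B u u + t * B u y + t * B y u + t ^ 2 * B y y := by
        rw [haddl, haddr, haddr, hsmull, hsmull, hsmulr, hsmulr]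
        ring
      rw [this, hu, hBsymm y u] at h
      nlinarith
    have h := key (-c / (d + 1))
    have hdpos : (0 : ℝ) < d + 1 := by linarith
    by_contra hne
    have hc2 : 0 < c ^ 2 := by positivity
    have : 2 * (-c / (d + 1)) * c + (-c / (d + 1)) ^ 2 * d
        = c ^ 2 * (-(d + 2)) / (d + 1) ^ 2 := by
      field_simp
      ring
    rw [this] at h
    have : c ^ 2 * (-(d + 2)) / (d + 1) ^ 2 < 0 := by
      apply div_neg_of_neg_of_pos
      · nlinarith
      · positivity
    linarith
  -- R is A-invariant
  have hAR : ∀ x : V, x ∈ R → A x ∈ R := by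
    intro x hx
    rw [← hrad]
    intro y
    rw [hskew x y, hmem x hx (A y), neg_zero]
  have hARk : ∀ (k : ℕ) (x : V), x ∈ R → (A ^ k) x ∈ R := by
    intro k
    induction k with
    | zero => intro x hx; simpa using hx
    | succ k ih =>
      intro x hx
      have : (A ^ (k + 1)) x = (A ^ k) (A x) := by rw [pow_succ]; rfl
      rw [this]; exact ih _ (hAR x hx)
  -- the halving step
  have hstep : ∀ m : ℕ, (∀ x : V, (A ^ (2 * m)) x ∈ R) → ∀ x : V, (A ^ m) x ∈ R := by
    intro m hm x
    apply hcs
    have h1 : (A ^ m) ((A ^ m) x) = (A ^ (2 * m)) x := by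
      rw [two_mul, pow_add]; rfl
    have := hiter m ((A ^ m) x) x
    -- B (A^m x) (A^m x) = B (A^m (A^m x)) x up to sign... use it on (x, A^m x)?
    have h2 : B ((A ^ m) x) ((A ^ m) x) = (-1 : ℝ) ^ m * B x ((A ^ m) ((A ^ m) x)) :=
      hiter m x ((A ^ m) x)
    rw [h2, h1, hBsymm, hmem _ (hm x) x, mul_zero]
  -- main descent: ∀ m ≥ 1, (∀ x, A^m x ∈ R) → ∀ x, A x ∈ R
  have hdesc : ∀ m : ℕ, 1 ≤ m → (∀ x : V, (A ^ m) x ∈ R) → ∀ x : V, A x ∈ R := by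
    intro m
    induction m using Nat.strong_induction_on with
    | _ m ih =>
      intro hm1 hm
      rcases eq_or_lt_of_le hm1 with h1 | h1
      · intro x
        have := hm x
        rwa [← h1, pow_one] at this
      · -- m ≥ 2; let m' = (m+1)/2
        set m' := (m + 1) / 2 with hm'
        have hm'1 : 1 ≤ m' := by omega
        have hm'lt : m' < m := by omega
        have h2m' : m ≤ 2 * m' := by omega
        have hbig : ∀ x : V, (A ^ (2 * m')) x ∈ R := by
          intro x
          have heq : 2 * m' - m + m = 2 * m' := by omega
          have h3 : (A ^ (2 * m' - m)) ((A ^ m) x) = (A ^ (2 * m')) x := by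
            rw [← Module.End.mul_apply, ← pow_add, heq]
          rw [← h3]
          exact hARk _ _ (hm x)
        exact ih m' hm'lt hm'1 (hstep m' hbig)
  obtain ⟨n, hn⟩ := hAnil
  intro x
  refine hdesc (n + 1) (by omega) (fun y => ?_) x
  have : (A ^ (n + 1)) y = A ((A ^ n) y) := by rw [pow_succ']; rfl
  rw [this, hn]
  simp
end

section
/- Let V be a real vector space with a positive semidefinite symmetric bilinear form whose radical 𝔬 = V^⊥ has dimension 2. If A : V → V is nilpotent and skew-symmetric with respect to the form, then A(V) ⊆ 𝔬. -/
/-- If a symmetric bilinear form on `V` is positive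
semidefinite with 2-dimensional radical `𝔬`, then any endomorphism of `V`
that is both nilpotent and skew-symmetric has image contained in `𝔬`. -/
theorem nilpotent_skew_image_in_radical_two
    {V : Type*} [AddCommGroup V] [Module ℝ V] [FiniteDimensional ℝ V]
    (B : V → V → ℝ) (hBsymm : ∀ x y, B x y = B y x)
    (hBbilin : IsLinearMap ℝ (fun x => B x) ∧ ∀ x, IsLinearMap ℝ (B x))
    (hBpsd : ∀ x, 0 ≤ B x x)
    (o : Submodule ℝ V) (ho : Module.finrank ℝ o = 2)
    (hrad : ∀ x : V, x ∈ o ↔ ∀ y : V, B x y = 0)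
    (A : V →ₗ[ℝ] V)
    (hAskew : ∀ x y : V, B (A x) y + B x (A y) = 0)
    (hAnil : IsNilpotent A) :
    ∀ x : V, A x ∈ o := by
  obtain ⟨n, hn⟩ := hAnil
  have hadd_l : ∀ a b y : V, B (a + b) y = B a y + B b y := fun a b y => by
    simpa using congrFun (hBbilin.1.map_add a b) y
  have hsmul_l : ∀ (t : ℝ) (a y : V), B (t • a) y = t * B a y := fun t a y => by
    simpa using congrFun (hBbilin.1.map_smul t a) y
  have hadd_r : ∀ x a b : V, B x (a + b) = B x a + B x b := fun x a b =>
    (hBbilin.2 x).map_add a b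
  have hsmul_r : ∀ (x : V) (t : ℝ) (y : V), B x (t • y) = t * B x y := fun x t y => by
    simpa using (hBbilin.2 x).map_smul t y
  -- Cauchy–Schwarz style: a null vector is in the radical
  have hCS : ∀ v : V, B v v = 0 → v ∈ o := by
    intro v hv
    rw [hrad]
    intro y
    by_contra hc
    set c := B v y with hcdef
    set q := B y y with hqdef
    have hq : 0 ≤ q := hBpsd y
    set t : ℝ := -c / (q + 1) with htdef
    have hexp : B (v + t • y) (v + t • y) = 2 * t * c + t ^ 2 * q := by
      rw [hadd_l, hadd_r, hadd_r, hsmul_l, hsmul_l, hsmul_r, hsmul_r, hv, hBsymm y v]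
      ring
    have hpos := hBpsd (v + t • y)
    rw [hexp, htdef] at hpos
    have hq1 : 0 < q + 1 := by linarith
    have hc2 : 0 < c ^ 2 := by positivity
    have heq : 2 * (-c / (q + 1)) * c + (-c / (q + 1)) ^ 2 * q
        = -(c ^ 2 * (q + 2)) / (q + 1) ^ 2 := by
      field_simp
      ring
    rw [heq, neg_div] at hpos
    have : 0 < c ^ 2 * (q + 2) / (q + 1) ^ 2 := by positivity
    linarith
  have hn1 : A ^ (n + 1) = 0 := by rw [pow_succ, hn, zero_mul]
  have key : ∀ k : ℕ, (∀ x, (A ^ (k + 2)) x ∈ o) → ∀ x, (A ^ (k + 1)) x ∈ o := by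
    intro k h x
    apply hCS
    have h1 := hAskew ((A ^ k) x) ((A ^ (k + 1)) x)
    have e1 : A ((A ^ k) x) = (A ^ (k + 1)) x := by
      rw [pow_succ', Module.End.mul_apply]
    have e2 : A ((A ^ (k + 1)) x) = (A ^ (k + 2)) x := by
      rw [show A ^ (k + 2) = A * A ^ (k + 1) from pow_succ' A (k + 1), Module.End.mul_apply]
    rw [e1, e2] at h1
    have h2 : B ((A ^ k) x) ((A ^ (k + 2)) x) = 0 := by
      rw [hBsymm]
      exact (hrad _).mp (h x) _
    linarith
  have main : ∀ d k : ℕ, k + 1 + d = n + 1 → ∀ x, (A ^ (k + 1)) x ∈ o := by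
    intro d
    induction d with
    | zero =>
      intro k hk x
      have hkn : k + 1 = n + 1 := by omega
      rw [hkn, hn1]
      simpa using o.zero_mem
    | succ d ih =>
      intro k hk x
      exact key k (fun y => ih (k + 1) (by omega) y) x
  intro x
  have := main n 0 (by omega) x
  simpa using this
end

section
/- (Generalized Cartan Lemma, 2-form case) Let ω₁, ω₂ be alternating 2-forms and ξ, η linear 1-forms on a finite-dimensional real vector space V, with ξ and η linearly independent, such that ω₁ ∧ ξ + ω₂ ∧ η = 0. Then there exist 1-forms γ₁₁, γ₁₂, γ₂₂ on V such that ω₁ = γ₁₁ ∧ ξ + γ₁₂ ∧ η and ω₂ = γ₁₂ ∧ ξ + γ₂₂ ∧ η. In particular rank ω₁ ≤ 4 and rank ω₂ ≤ 4. -/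
private lemma surj_pair {V : Type*} [AddCommGroup V] [Module ℝ V] [FiniteDimensional ℝ V]
    (ξ η : V →ₗ[ℝ] ℝ) (hli : LinearIndependent ℝ ![ξ, η]) :
    Function.Surjective (ξ.prod η) := by
  rw [← LinearMap.range_eq_top]
  by_contra h
  have hlt : LinearMap.range (ξ.prod η) < ⊤ := lt_top_iff_ne_top.mpr h
  have hr : Module.finrank ℝ (LinearMap.range (ξ.prod η)) < Module.finrank ℝ (ℝ × ℝ) := by
    have := Submodule.finrank_lt_finrank_of_lt hlt
    simpa using this
  have h2 : Module.finrank ℝ (ℝ × ℝ) = 2 := by simp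
  have h1 : Module.finrank ℝ (LinearMap.range (ξ.prod η)) ≤ 1 := by omega
  obtain ⟨v, hv⟩ := (Submodule.finrank_le_one_iff_isPrincipal _).mp h1 |>.principal
  have key : ∀ x : V, ∃ c : ℝ, (ξ x, η x) = c • v := by
    intro x
    have : (ξ x, η x) ∈ LinearMap.range (ξ.prod η) := ⟨x, rfl⟩
    rw [hv, Submodule.mem_span_singleton] at this
    obtain ⟨c, hc⟩ := this
    exact ⟨c, hc.symm⟩
  have hzero : v.2 • ξ + (-v.1) • η = 0 := by
    ext x
    obtain ⟨c, hc⟩ := key x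
    have h1 : ξ x = c * v.1 := congrArg Prod.fst hc
    have h2 : η x = c * v.2 := congrArg Prod.snd hc
    simp [h1, h2]; ring
  have hst := (LinearIndependent.pair_iff.mp hli) v.2 (-v.1) hzero
  have hv0 : v = (0 : ℝ × ℝ) := Prod.ext (by simpa using neg_eq_zero.mp hst.2) hst.1
  have hξ : ξ = 0 := by
    ext x
    obtain ⟨c, hc⟩ := key x
    have := congrArg Prod.fst hc
    simp [hv0] at this
    simpa using this
  exact one_ne_zero ((LinearIndependent.pair_iff.mp hli) 1 0 (by simp [hξ])).1

private lemma rank_le_four {V : Type*} [AddCommGroup V] [Module ℝ V] [FiniteDimensional ℝ V]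
    (ω : V →ₗ[ℝ] V →ₗ[ℝ] ℝ) (f g h k : V →ₗ[ℝ] ℝ)
    (hform : ∀ x y : V, ω x y = (f x * h y - f y * h x) + (g x * k y - g y * k x)) :
    Module.finrank ℝ V - Module.finrank ℝ (LinearMap.ker ω) ≤ 4 := by
  set L : V →ₗ[ℝ] (ℝ × ℝ) × (ℝ × ℝ) := (f.prod h).prod (g.prod k) with hL
  have hker : LinearMap.ker L ≤ LinearMap.ker ω := by
    intro x hx
    simp only [hL, LinearMap.mem_ker, LinearMap.prod_apply, Function.prod, Prod.mk_eq_zero] at hx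
    obtain ⟨⟨hf, hh⟩, hg, hk'⟩ := hx
    rw [LinearMap.mem_ker]
    ext y
    simp [hform x y, hf, hh, hg, hk']
  have hmono : Module.finrank ℝ (LinearMap.ker L) ≤ Module.finrank ℝ (LinearMap.ker ω) :=
    Submodule.finrank_mono hker
  have hrn : Module.finrank ℝ (LinearMap.range L) + Module.finrank ℝ (LinearMap.ker L)
      = Module.finrank ℝ V := LinearMap.finrank_range_add_finrank_ker L
  have hr4 : Module.finrank ℝ (LinearMap.range L) ≤ 4 := by
    have := Submodule.finrank_le (LinearMap.range L)
    simpa using this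
  omega

/-- generalized Cartan Lemma, 2-form case. If `ω₁, ω₂` are
alternating 2-forms and `ξ, η` linearly independent 1-forms on `V` with
`ω₁ ∧ ξ + ω₂ ∧ η = 0`, then `ω₁ = γ₁₁ ∧ ξ + γ₁₂ ∧ η` and
`ω₂ = γ₁₂ ∧ ξ + γ₂₂ ∧ η` for some 1-forms `γ₁₁, γ₁₂, γ₂₂` (note the symmetry
of the mixed coefficient). In particular `rank ω₁ ≤ 4` and `rank ω₂ ≤ 4`. -/
theorem generalized_cartan_lemma
    {V : Type*} [AddCommGroup V] [Module ℝ V] [FiniteDimensional ℝ V]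
    (ω₁ ω₂ : V →ₗ[ℝ] V →ₗ[ℝ] ℝ)
    (hω₁alt : ∀ x : V, ω₁ x x = 0) (hω₂alt : ∀ x : V, ω₂ x x = 0)
    (ξ η : V →ₗ[ℝ] ℝ) (hli : LinearIndependent ℝ ![ξ, η])
    (hwedge : ∀ x y z : V,
      ω₁ x y * ξ z + ω₁ y z * ξ x + ω₁ z x * ξ y +
      ω₂ x y * η z + ω₂ y z * η x + ω₂ z x * η y = 0) :
    (∃ γ₁₁ γ₁₂ γ₂₂ : V →ₗ[ℝ] ℝ,
      (∀ x y : V, ω₁ x y = (γ₁₁ x * ξ y - γ₁₁ y * ξ x) + (γ₁₂ x * η y - γ₁₂ y * η x)) ∧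
      (∀ x y : V, ω₂ x y = (γ₁₂ x * ξ y - γ₁₂ y * ξ x) + (γ₂₂ x * η y - γ₂₂ y * η x))) ∧
    Module.finrank ℝ V - Module.finrank ℝ (LinearMap.ker ω₁) ≤ 4 ∧
    Module.finrank ℝ V - Module.finrank ℝ (LinearMap.ker ω₂) ≤ 4 := by
  -- skew-symmetry
  have skew₁ : ∀ x y : V, ω₁ y x = -ω₁ x y := by
    intro x y
    have := hω₁alt (x + y)
    simp only [map_add, LinearMap.add_apply] at this
    rw [hω₁alt x, hω₁alt y] at this
    linarith
  have skew₂ : ∀ x y : V, ω₂ y x = -ω₂ x y := by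
    intro x y
    have := hω₂alt (x + y)
    simp only [map_add, LinearMap.add_apply] at this
    rw [hω₂alt x, hω₂alt y] at this
    linarith
  -- dual pair
  obtain ⟨a, ha⟩ := surj_pair ξ η hli (1, 0)
  obtain ⟨b, hb⟩ := surj_pair ξ η hli (0, 1)
  have hξa : ξ a = 1 := congrArg Prod.fst ha
  have hηa : η a = 0 := congrArg Prod.snd ha
  have hξb : ξ b = 0 := congrArg Prod.fst hb
  have hηb : η b = 1 := congrArg Prod.snd hb
  set γ₁₁ : V →ₗ[ℝ] ℝ := -(ω₁ a) with hγ₁₁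
  set γ₁₂ : V →ₗ[ℝ] ℝ := -(ω₂ a) with hγ₁₂
  set γ₂₂ : V →ₗ[ℝ] ℝ := -(ω₂ b) + (ω₂ b a) • ξ with hγ₂₂
  have key : ∀ y : V, ω₂ a y = ω₁ b y - ω₁ b a * ξ y - ω₂ b a * η y := by
    intro y
    have W := hwedge a y b
    rw [hξa, hηa, hξb, hηb] at W
    linear_combination W - skew₁ b y
  have hform₁ : ∀ x y : V,
      ω₁ x y = (γ₁₁ x * ξ y - γ₁₁ y * ξ x) + (γ₁₂ x * η y - γ₁₂ y * η x) := by
    intro x y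
    have W := hwedge x y a
    rw [hξa, hηa] at W
    simp only [hγ₁₁, hγ₁₂, LinearMap.neg_apply]
    linear_combination W - ξ x * skew₁ a y - η x * skew₂ a y
  have hform₂ : ∀ x y : V,
      ω₂ x y = (γ₁₂ x * ξ y - γ₁₂ y * ξ x) + (γ₂₂ x * η y - γ₂₂ y * η x) := by
    intro x y
    have W := hwedge x y b
    rw [hξb, hηb] at W
    simp only [hγ₁₂, hγ₂₂, LinearMap.neg_apply, LinearMap.add_apply, LinearMap.smul_apply,
      smul_eq_mul]
    linear_combination W + ξ y * key x - ξ x * key y - ξ x * skew₁ b y - η x * skew₂ b y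
  refine ⟨⟨γ₁₁, γ₁₂, γ₂₂, hform₁, hform₂⟩,
    rank_le_four ω₁ γ₁₁ γ₁₂ ξ η hform₁,
    rank_le_four ω₂ γ₁₂ γ₂₂ ξ η hform₂⟩
end

section
/- Let ω₁, ω₂ be linearly independent alternating 2-forms on a finite-dimensional real vector space V such that every nonzero linear combination μ₁ω₁ + μ₂ω₂ has rank exactly 2. Then there exist three linearly independent 1-forms ζ₁, ζ₂, ζ₃ on V such that ω₁ = ζ₁ ∧ ζ₃ and ω₂ = ζ₂ ∧ ζ₃. -/
open Module LinearMap

section aux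
variable {V : Type*} [AddCommGroup V] [Module ℝ V] [FiniteDimensional ℝ V]



/-- Dual vectors for a linearly independent family of functionals. -/
lemma aux_exists_dual_vec {m : ℕ} {φ : Fin m → (V →ₗ[ℝ] ℝ)}
    (hφ : LinearIndependent ℝ φ) (i₀ : Fin m) :
    ∃ z : V, φ i₀ z = 1 ∧ ∀ j, j ≠ i₀ → φ j z = 0 := by
  classical
  -- basis of the span
  let b : Basis (Fin m) ℝ (Submodule.span ℝ (Set.range φ)) := Basis.span hφ
  obtain ⟨ψ, hψ⟩ := LinearMap.exists_extend (b.coord i₀)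
  refine ⟨(Module.evalEquiv ℝ V).symm ψ, ?_, ?_⟩
  · have h1 : φ i₀ ((Module.evalEquiv ℝ V).symm ψ) = ψ (φ i₀) :=
      Module.apply_evalEquiv_symm_apply ℝ V (φ i₀) ψ
    rw [h1]
    have h2 : ψ (φ i₀) = (b.coord i₀) ⟨φ i₀, Submodule.subset_span (Set.mem_range_self i₀)⟩ := by
      rw [← hψ]; rfl
    rw [h2]
    have h3 : (⟨φ i₀, Submodule.subset_span (Set.mem_range_self i₀)⟩ :
        Submodule.span ℝ (Set.range φ)) = b i₀ := by
      apply Subtype.ext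
      simp [b, Basis.span_apply]
    rw [h3]
    simp
  · intro j hj
    have h1 : φ j ((Module.evalEquiv ℝ V).symm ψ) = ψ (φ j) :=
      Module.apply_evalEquiv_symm_apply ℝ V (φ j) ψ
    rw [h1]
    have h2 : ψ (φ j) = (b.coord i₀) ⟨φ j, Submodule.subset_span (Set.mem_range_self j)⟩ := by
      rw [← hψ]; rfl
    rw [h2]
    have h3 : (⟨φ j, Submodule.subset_span (Set.mem_range_self j)⟩ :
        Submodule.span ℝ (Set.range φ)) = b j := by
      apply Subtype.ext
      simp [b, Basis.span_apply]
    rw [h3]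
    simp [Basis.coord_apply, Basis.repr_self, Finsupp.single_apply, hj]




lemma aux_skew {ω : V →ₗ[ℝ] V →ₗ[ℝ] ℝ} (halt : ∀ x, ω x x = 0) (x y : V) :
    ω x y = - ω y x := by
  have h := halt (x + y)
  simp only [map_add, LinearMap.add_apply, halt] at h
  linarith

/-- Decomposition of a rank-2 alternating form. -/
lemma aux_decomp (ω : V →ₗ[ℝ] V →ₗ[ℝ] ℝ) (halt : ∀ x, ω x x = 0)
    (hrank : Module.finrank ℝ V - Module.finrank ℝ (LinearMap.ker ω) = 2) :
    ∃ α β : V →ₗ[ℝ] ℝ, ∃ x y : V, α x = 1 ∧ α y = 0 ∧ β x = 0 ∧ β y = 1 ∧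
      ∀ z w, ω z w = α z * β w - α w * β z := by
  classical
  have hne : ω ≠ 0 := by
    intro h
    rw [h, LinearMap.ker_zero, finrank_top, Nat.sub_self] at hrank
    omega
  -- find x y with ω x y = 1
  obtain ⟨x, hx⟩ : ∃ x, ω x ≠ 0 := by
    by_contra h
    push_neg at h
    exact hne (LinearMap.ext h)
  obtain ⟨y₀, hy₀⟩ : ∃ y₀, ω x y₀ ≠ 0 := by
    by_contra h
    push_neg at h
    exact hx (LinearMap.ext h)
  set y : V := (ω x y₀)⁻¹ • y₀ with hy
  have hxy1 : ω x y = 1 := by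
    rw [hy, map_smul, smul_eq_mul, inv_mul_cancel₀ hy₀]
  have hyx : ω y x = -1 := by
    rw [aux_skew halt, hxy1]
  -- kernel and span
  set K : Submodule ℝ V := LinearMap.ker ω with hK
  have hKle : finrank ℝ K ≤ finrank ℝ V := Submodule.finrank_le K
  have hKrank : finrank ℝ K + 2 = finrank ℝ V := by omega
  set S : Submodule ℝ V := Submodule.span ℝ {x, y} with hS
  have hxyind : LinearIndependent ℝ ![x, y] := by
    rw [LinearIndependent.pair_iff]
    intro s t hst
    have h1 : ω (s • x + t • y) y = 0 := by rw [hst]; simp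
    have h2 : ω (s • x + t • y) x = 0 := by rw [hst]; simp
    simp only [map_add, map_smul, LinearMap.add_apply, LinearMap.smul_apply,
      smul_eq_mul, hxy1, hyx, halt] at h1 h2
    constructor <;> nlinarith
  have hSrank : finrank ℝ S = 2 := by
    have : Set.range ![x, y] = {x, y} := by
      simp [Matrix.range_cons, Matrix.range_empty, Set.pair_comm]
    rw [hS, ← this, finrank_span_eq_card hxyind]
    simp
  have hKS : K ⊓ S = ⊥ := by
    rw [Submodule.eq_bot_iff]
    rintro z ⟨hzK, hzS⟩
    obtain ⟨a, b, hab⟩ := Submodule.mem_span_pair.mp hzS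
    have hz0 : ω z = 0 := hzK
    have h1 : ω z y = 0 := by rw [hz0]; rfl
    have h2 : ω z x = 0 := by rw [hz0]; rfl
    rw [← hab] at h1 h2
    simp only [map_add, map_smul, LinearMap.add_apply, LinearMap.smul_apply,
      smul_eq_mul, hxy1, hyx, halt] at h1 h2
    have ha : a = 0 := by nlinarith
    have hb : b = 0 := by nlinarith
    rw [← hab, ha, hb]; simp
  have hsup : K ⊔ S = ⊤ := by
    apply Submodule.eq_top_of_finrank_eq
    have := Submodule.finrank_sup_add_finrank_inf_eq K S
    rw [hKS] at this
    simp only [finrank_bot, add_zero] at this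
    omega
  -- the two functionals
  refine ⟨ω.flip y, ω x, x, y, ?_, ?_, ?_, ?_, ?_⟩
  · simpa using hxy1
  · simpa using halt y
  · simpa using halt x
  · simpa using hxy1
  intro z w
  simp only [LinearMap.flip_apply]
  set z' : V := z - (ω z y) • x - (ω x z) • y with hz'
  have hz'x : ω z' x = 0 := by
    simp only [hz', map_sub, map_smul, LinearMap.sub_apply, LinearMap.smul_apply,
      smul_eq_mul, halt, hyx]
    have := aux_skew halt z x
    linarith
  have hz'y : ω z' y = 0 := by
    simp only [hz', map_sub, map_smul, LinearMap.sub_apply, LinearMap.smul_apply,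
      smul_eq_mul, halt, hxy1]
    ring
  have hz'ker : ∀ w', ω z' w' = 0 := by
    intro w'
    have hw' : w' ∈ K ⊔ S := by rw [hsup]; trivial
    obtain ⟨k, hk, s, hs, hks⟩ := Submodule.mem_sup.mp hw'
    obtain ⟨a, b, hab⟩ := Submodule.mem_span_pair.mp hs
    have hωk : ω z' k = 0 := by
      rw [aux_skew halt]
      have : ω k = 0 := hk
      rw [this]; simp
    rw [← hks, ← hab]
    simp only [map_add, map_smul, smul_eq_mul, hωk, hz'x, hz'y]
    ring
  have hzz : z = z' + (ω z y) • x + (ω x z) • y := by rw [hz']; abel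
  have hzw : ω z w = ω z y * ω x w + ω x z * ω y w := by
    conv_lhs => rw [hzz]
    simp only [map_add, map_smul, LinearMap.add_apply, LinearMap.smul_apply,
      smul_eq_mul, hz'ker]
    ring
  rw [hzw, aux_skew halt y w]
  ring


end aux

set_option linter.unusedSectionVars false
set_option maxHeartbeats 2000000

/-- If `ω₁, ω₂` are linearly independent alternating 2-forms
such that every nonzero linear combination has rank exactly 2, then
`ω₁ = ζ₁ ∧ ζ₃` and `ω₂ = ζ₂ ∧ ζ₃` for some linearly independent 1-forms
`ζ₁, ζ₂, ζ₃`. -/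
theorem pencil_of_rank_two_forms
    {V : Type*} [AddCommGroup V] [Module ℝ V] [FiniteDimensional ℝ V]
    (ω₁ ω₂ : V →ₗ[ℝ] V →ₗ[ℝ] ℝ)
    (hω₁alt : ∀ x : V, ω₁ x x = 0) (hω₂alt : ∀ x : V, ω₂ x x = 0)
    (hli : LinearIndependent ℝ ![ω₁, ω₂])
    (hrank : ∀ μ₁ μ₂ : ℝ, (μ₁ ≠ 0 ∨ μ₂ ≠ 0) →
      Module.finrank ℝ V - Module.finrank ℝ (LinearMap.ker (μ₁ • ω₁ + μ₂ • ω₂)) = 2) :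
    ∃ ζ₁ ζ₂ ζ₃ : V →ₗ[ℝ] ℝ, LinearIndependent ℝ ![ζ₁, ζ₂, ζ₃] ∧
      (∀ x y : V, ω₁ x y = ζ₁ x * ζ₃ y - ζ₁ y * ζ₃ x) ∧
      (∀ x y : V, ω₂ x y = ζ₂ x * ζ₃ y - ζ₂ y * ζ₃ x) := by
  classical
  have hr1 : Module.finrank ℝ V - Module.finrank ℝ (LinearMap.ker ω₁) = 2 := by
    have h := hrank 1 0 (Or.inl one_ne_zero)
    rwa [one_smul, zero_smul, add_zero] at h
  have hr2 : Module.finrank ℝ V - Module.finrank ℝ (LinearMap.ker ω₂) = 2 := by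
    have h := hrank 0 1 (Or.inr one_ne_zero)
    rwa [one_smul, zero_smul, zero_add] at h
  have hr12 : Module.finrank ℝ V - Module.finrank ℝ (LinearMap.ker (ω₁ + ω₂)) = 2 := by
    have h := hrank 1 1 (Or.inl one_ne_zero)
    rwa [one_smul, one_smul] at h
  obtain ⟨α₁, β₁, x₁, y₁, ha1x, ha1y, hb1x, hb1y, h₁⟩ := aux_decomp ω₁ hω₁alt hr1
  obtain ⟨α₂, β₂, x₂, y₂, ha2x, ha2y, hb2x, hb2y, h₂⟩ := aux_decomp ω₂ hω₂alt hr2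
  have hli2 : ∀ a b : ℝ, a • ω₁ + b • ω₂ = 0 → a = 0 ∧ b = 0 := by
    intro a b hab
    have h := (Fintype.linearIndependent_iff (R := ℝ) (v := ![ω₁, ω₂])).mp hli ![a, b]
      (by simpa [Fin.sum_univ_two] using hab)
    exact ⟨by simpa using h 0, by simpa using h 1⟩
  -- the four functionals are dependent
  have hdep : ¬ LinearIndependent ℝ ![α₁, β₁, α₂, β₂] := by
    intro hind
    have hKle1 : Module.finrank ℝ (LinearMap.ker ω₁) ≤ Module.finrank ℝ V :=
      Submodule.finrank_le _
    have hKle12 : Module.finrank ℝ (LinearMap.ker (ω₁ + ω₂)) ≤ Module.finrank ℝ V :=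
      Submodule.finrank_le _
    have hsub : LinearMap.ker (ω₁ + ω₂) ≤ LinearMap.ker ω₁ := by
      intro z hz
      have hz0 : (ω₁ + ω₂) z = 0 := hz
      have hcoef := Fintype.linearIndependent_iff.mp hind
        ![-(β₁ z), α₁ z, -(β₂ z), α₂ z] ?_
      · rw [LinearMap.mem_ker]
        apply LinearMap.ext; intro w
        have ha := hcoef 1
        have hb := hcoef 0
        simp only [Matrix.cons_val_one, Matrix.cons_val_zero, Matrix.head_cons,
          neg_eq_zero] at ha hb
        rw [LinearMap.zero_apply, h₁ z w, ha, hb]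
        ring
      · apply LinearMap.ext; intro w
        have hzw : ω₁ z w + ω₂ z w = 0 := by
          have : (ω₁ + ω₂) z w = 0 := by rw [hz0]; rfl
          simpa using this
        rw [h₁ z w, h₂ z w] at hzw
        simp only [Fin.sum_univ_four, Matrix.cons_val_zero, Matrix.cons_val_one,
          Matrix.head_cons, Matrix.cons_val_two, Matrix.tail_cons, Matrix.cons_val_three,
          LinearMap.add_apply, LinearMap.smul_apply, LinearMap.neg_apply, smul_eq_mul,
          LinearMap.zero_apply, neg_mul, neg_smul]
        linarith
    have hker_eq : LinearMap.ker (ω₁ + ω₂) = LinearMap.ker ω₁ :=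
      Submodule.eq_of_le_of_finrank_le hsub (by omega)
    obtain ⟨z, hz1, hz0⟩ := aux_exists_dual_vec hind (2 : Fin 4)
    have ha2z : α₂ z = 1 := by simpa using hz1
    have ha1z : α₁ z = 0 := by simpa using hz0 0 (by decide)
    have hb1z : β₁ z = 0 := by simpa using hz0 1 (by decide)
    have hb2z : β₂ z = 0 := by simpa using hz0 3 (by decide)
    have hzker1 : z ∈ LinearMap.ker ω₁ := by
      rw [LinearMap.mem_ker]
      apply LinearMap.ext; intro w
      rw [LinearMap.zero_apply, h₁ z w, ha1z, hb1z]
      ring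
    rw [← hker_eq] at hzker1
    have hz12 : (ω₁ + ω₂) z = 0 := hzker1
    have : ω₂ z y₂ = 0 := by
      have h1 : (ω₁ + ω₂) z y₂ = 0 := by rw [hz12]; rfl
      have h2 : ω₁ z y₂ = 0 := by rw [h₁ z y₂, ha1z, hb1z]; ring
      simp only [LinearMap.add_apply] at h1
      linarith
    rw [h₂ z y₂, ha2z, hb2y, hb2z] at this
    norm_num at this
  obtain ⟨g, hgsum, i, hgi⟩ := (Fintype.not_linearIndependent_iff (R := ℝ) (v := ![α₁, β₁, α₂, β₂])).mp hdep
  set c₁ := g 0 with hc1; set c₂ := g 1 with hc2; set c₃ := g 2 with hc3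
  set c₄ := g 3 with hc4
  have hrel : c₁ • α₁ + c₂ • β₁ + c₃ • α₂ + c₄ • β₂ = 0 := by
    simpa [Fin.sum_univ_four] using hgsum
  have hrelw : ∀ w, c₁ * α₁ w + c₂ * β₁ w + c₃ * α₂ w + c₄ * β₂ w = 0 := by
    intro w
    have : (c₁ • α₁ + c₂ • β₁ + c₃ • α₂ + c₄ • β₂) w = 0 := by rw [hrel]; rfl
    simpa using this
  have h12 : c₁ ≠ 0 ∨ c₂ ≠ 0 := by
    by_contra h
    push_neg at h
    obtain ⟨e1, e2⟩ := h
    have hx := hrelw x₂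
    have hy := hrelw y₂
    rw [e1, e2, ha2x, hb2x] at hx
    rw [e1, e2, ha2y, hb2y] at hy
    have e3 : c₃ = 0 := by linarith
    have e4 : c₄ = 0 := by linarith
    apply hgi
    fin_cases i <;> assumption
  have h34 : c₃ ≠ 0 ∨ c₄ ≠ 0 := by
    by_contra h
    push_neg at h
    obtain ⟨e3, e4⟩ := h
    have hx := hrelw x₁
    have hy := hrelw y₁
    rw [e3, e4, ha1x, hb1x] at hx
    rw [e3, e4, ha1y, hb1y] at hy
    have e1 : c₁ = 0 := by linarith
    have e2 : c₂ = 0 := by linarith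
    apply hgi
    fin_cases i <;> assumption
  set ζ₃ : V →ₗ[ℝ] ℝ := c₁ • α₁ + c₂ • β₁ with hζ₃def
  have hζ₃A : ∀ w, ζ₃ w = c₁ * α₁ w + c₂ * β₁ w := by
    intro w; simp [hζ₃def]
  have hζ₃B : ∀ w, ζ₃ w = -(c₃ * α₂ w + c₄ * β₂ w) := by
    intro w
    have := hrelw w
    rw [hζ₃A]
    linarith
  have hζ₃ne : ζ₃ ≠ 0 := by
    intro h
    have hx : ζ₃ x₁ = 0 := by rw [h]; rfl
    have hy : ζ₃ y₁ = 0 := by rw [h]; rfl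
    rw [hζ₃A, ha1x, hb1x] at hx
    rw [hζ₃A, ha1y, hb1y] at hy
    rcases h12 with h' | h'
    · exact h' (by linarith)
    · exact h' (by linarith)
  obtain ⟨ζ₁, hζ₁⟩ : ∃ ζ₁ : V →ₗ[ℝ] ℝ, ∀ z w, ω₁ z w = ζ₁ z * ζ₃ w - ζ₁ w * ζ₃ z := by
    by_cases hc : c₂ = 0
    · have hc₁ : c₁ ≠ 0 := h12.resolve_right (by simp [hc])
      refine ⟨(-c₁⁻¹) • β₁, fun z w => ?_⟩
      rw [h₁ z w]
      simp only [LinearMap.smul_apply, smul_eq_mul, hζ₃A, hc]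
      field_simp
      ring
    · refine ⟨c₂⁻¹ • α₁, fun z w => ?_⟩
      rw [h₁ z w]
      simp only [LinearMap.smul_apply, smul_eq_mul, hζ₃A]
      field_simp
      ring
  obtain ⟨ζ₂, hζ₂⟩ : ∃ ζ₂ : V →ₗ[ℝ] ℝ, ∀ z w, ω₂ z w = ζ₂ z * ζ₃ w - ζ₂ w * ζ₃ z := by
    by_cases hc : c₄ = 0
    · have hc₃ : c₃ ≠ 0 := h34.resolve_right (by simp [hc])
      refine ⟨c₃⁻¹ • β₂, fun z w => ?_⟩
      rw [h₂ z w]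
      simp only [LinearMap.smul_apply, smul_eq_mul, hζ₃B, hc]
      field_simp
      ring
    · refine ⟨(-c₄⁻¹) • α₂, fun z w => ?_⟩
      rw [h₂ z w]
      simp only [LinearMap.smul_apply, smul_eq_mul, hζ₃B]
      field_simp
      ring
  refine ⟨ζ₁, ζ₂, ζ₃, ?_, hζ₁, hζ₂⟩
  rw [Fintype.linearIndependent_iff]
  intro q hq
  have hq' : q 0 • ζ₁ + q 1 • ζ₂ + q 2 • ζ₃ = 0 := by
    simpa [Fin.sum_univ_three] using hq
  have hev : ∀ u, q 0 * ζ₁ u + q 1 * ζ₂ u + q 2 * ζ₃ u = 0 := by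
    intro u
    have : (q 0 • ζ₁ + q 1 • ζ₂ + q 2 • ζ₃) u = 0 := by rw [hq']; rfl
    simpa using this
  have hω : q 0 • ω₁ + q 1 • ω₂ = 0 := by
    apply LinearMap.ext; intro z; apply LinearMap.ext; intro w
    simp only [LinearMap.add_apply, LinearMap.smul_apply, smul_eq_mul,
      LinearMap.zero_apply]
    rw [hζ₁ z w, hζ₂ z w]
    linear_combination ζ₃ w * hev z - ζ₃ z * hev w
  obtain ⟨hq0, hq1⟩ := hli2 _ _ hω
  have hq2 : q 2 = 0 := by
    rw [hq0, hq1] at hq'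
    simp only [zero_smul, zero_add] at hq'
    rcases smul_eq_zero.mp hq' with h | h
    · exact h
    · exact absurd h hζ₃ne
  intro j
  fin_cases j <;> assumption
end
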